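/- For the map T : ℓ¹(ℕ) → ℓ¹(ℕ), T(x₁,x₂,...) = (1,x₁,x₂,...), one has Tⁿ0 = (1,1,...,1,0,0,...) (n ones), ‖Tⁿ0‖ = n, and for every x ∈ ℓ¹(ℕ), ‖x - Tⁿ0‖ - ‖Tⁿ0‖ → Σ_{s=1}^∞ (|x_s - 1| - 1) as n → ∞. -/

import Mathlib

open Filter Topology

theorem shift_orbit_metric_functional
    (T : lp (fun _ : ℕ => ℝ) 1 → lp (fun _ : ℕ => ℝ) 1)
    (hT : ∀ (x : lp (fun _ : ℕ => ℝ) 1) (n : ℕ),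
      T x n = if n = 0 then 1 else x (n - 1)) :
    (∀ n i : ℕ, (T^[n] 0) i = if i < n then (1 : ℝ) else 0) ∧
    (∀ n : ℕ, ‖T^[n] (0 : lp (fun _ : ℕ => ℝ) 1)‖ = n) ∧
    (∀ x : lp (fun _ : ℕ => ℝ) 1,
      Tendsto (fun n : ℕ => ‖x - T^[n] 0‖ - ‖T^[n] (0 : lp (fun _ : ℕ => ℝ) 1)‖)
        atTop (𝓝 (∑' s : ℕ, (|x s - 1| - 1)))) := by
  have hp : (0 : ℝ) < (1 : ENNReal).toReal := by norm_num
  -- coordinates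
  have hcoord : ∀ n i : ℕ, (T^[n] (0 : lp (fun _ : ℕ => ℝ) 1)) i
      = if i < n then (1 : ℝ) else 0 := by
    intro n
    induction n with
    | zero => intro i; simp [lp.coeFn_zero]
    | succ n ih =>
      intro i
      rw [Function.iterate_succ_apply', hT]
      rcases i with _ | j
      · simp
      · simp only [Nat.succ_ne_zero, if_false, Nat.succ_sub_one, ih j]
        by_cases h : j < n
        · rw [if_pos h, if_pos (by omega)]
        · rw [if_neg h, if_neg (by omega)]
  have hnorm1 : ∀ f : lp (fun _ : ℕ => ℝ) 1, ‖f‖ = ∑' i, |f i| := by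
    intro f
    rw [lp.norm_eq_tsum_rpow hp f]
    simp [Real.norm_eq_abs]
  -- norm of orbit
  have hnorm : ∀ n : ℕ, ‖T^[n] (0 : lp (fun _ : ℕ => ℝ) 1)‖ = n := by
    intro n
    rw [hnorm1]
    have : ∀ i ∉ Finset.range n, |(T^[n] (0 : lp (fun _ : ℕ => ℝ) 1)) i| = 0 := by
      intro i hi
      rw [hcoord n i, if_neg (by simpa using hi)]
      simp
    rw [tsum_eq_sum this]
    have : ∀ i ∈ Finset.range n, |(T^[n] (0 : lp (fun _ : ℕ => ℝ) 1)) i| = 1 := by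
      intro i hi
      rw [hcoord n i, if_pos (by simpa using hi)]
      simp
    rw [Finset.sum_congr rfl this]
    simp
  refine ⟨hcoord, hnorm, ?_⟩
  intro x
  have hsx : Summable fun i => |x i| := by
    have := (lp.memℓp x).summable hp
    simpa [Real.norm_eq_abs] using this
  have hsh : Summable fun s => |x s - 1| - 1 := by
    apply Summable.of_norm_bounded hsx
    intro s
    rw [Real.norm_eq_abs]
    calc |(|x s - 1| - 1)| = |(|x s - 1| - |(-1 : ℝ)|)| := by norm_num
      _ ≤ |(x s - 1) - (-1)| := abs_abs_sub_abs_le_abs_sub _ _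
      _ = |x s| := by ring_nf
  have hkey : ∀ n : ℕ, ‖x - T^[n] 0‖ - ‖T^[n] (0 : lp (fun _ : ℕ => ℝ) 1)‖
      = (∑ s ∈ Finset.range n, (|x s - 1| - 1)) + ∑' k, |x (k + n)| := by
    intro n
    rw [hnorm1, hnorm]
    have hc : ∀ i, |((x - T^[n] 0 : lp (fun _ : ℕ => ℝ) 1)) i|
        = if i < n then |x i - 1| else |x i| := by
      intro i
      have : ((x - T^[n] 0 : lp (fun _ : ℕ => ℝ) 1)) i = x i - (T^[n] 0) i := by
        simp [lp.coeFn_sub]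
      rw [this, hcoord n i]
      by_cases h : i < n <;> simp [h]
    have hsum : Summable fun i => |((x - T^[n] 0 : lp (fun _ : ℕ => ℝ) 1)) i| := by
      have := (lp.memℓp (x - T^[n] 0)).summable hp
      simpa [Real.norm_eq_abs] using this
    have h1 : (∑' i, |((x - T^[n] 0 : lp (fun _ : ℕ => ℝ) 1)) i|)
        = (∑ i ∈ Finset.range n, |x i - 1|) + ∑' k, |x (k + n)| := by
      rw [← Summable.sum_add_tsum_nat_add n hsum]
      congr 1
      · exact Finset.sum_congr rfl fun i hi => by
          rw [hc i, if_pos (Finset.mem_range.1 hi)]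
      · exact tsum_congr fun k => by rw [hc (k + n), if_neg (by omega)]
    have h2 : (∑ s ∈ Finset.range n, (|x s - 1| - 1))
        = (∑ s ∈ Finset.range n, |x s - 1|) - n := by
      rw [Finset.sum_sub_distrib]; simp
    rw [h1, h2]; ring
  have hA := hsh.hasSum.tendsto_sum_nat
  have hB := tendsto_sum_nat_add fun i => |x i|
  have hAB := hA.add hB
  rw [add_zero] at hAB
  exact Tendsto.congr (fun n => (hkey n).symm) hAB
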